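/- arXiv:2003.08699 — 3 statements merged into one kernel-verified Lean document; each statement's English description precedes it below -/
import Mathlib

section
/- Let n ≥ 2, α ≥ 0, β > 0, γ ∈ ℝ, and let f = (f¹,…,fⁿ) : [0,∞) → ℝⁿ be a continuous function with 0 ≤ f¹_t ≤ … ≤ fⁿ_t for all t ≥ 0 and such that 0 ≤ f¹_t < f²_t < … < fⁿ_t for Lebesgue-almost every t ≥ 0. Then for every t ≥ 0 the following equivalence holds: ∑_{i=1}^{n-1} ∫₀ᵗ f^{i+1}_s / (f^{i+1}_s − f^i_s) ds < ∞ if and only if ∑_{i=1}^{n} ∫₀ᵗ | α − 2γ f^i_s + β ∑_{j≠i} (f^i_s + f^j_s)/(f^i_s − f^j_s) | ds < ∞ (with the convention that the quotient f^i_s/(f^j_s − f^i_s) equals +∞ when f^j_s = f^i_s, this is harmless since equality only holds on a Lebesgue-null set of times). -/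
open MeasureTheory Finset


lemma antisym_double_sum {n : ℕ} (S : Finset (Fin n)) (h : Fin n → Fin n → ℝ)
    (hanti : ∀ i j, h j i = - h i j) :
    ∑ i ∈ S, ∑ j ∈ S.erase i, h i j = 0 := by
  have key : ∑ p ∈ (S ×ˢ S).filter (fun p => p.2 ≠ p.1), h p.1 p.2 = 0 := by
    apply Finset.sum_involution (fun p _ => Prod.swap p)
    · intro a _
      show h a.1 a.2 + h a.2 a.1 = 0
      rw [hanti a.1 a.2]; ring
    · intro a ha hne hsw
      apply hne
      have h2 : a.1 = a.2 := congrArg Prod.snd hsw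
      show h a.1 a.2 = 0
      rw [h2]
      linarith [hanti a.2 a.2]
    · intro a ha
      simp only [Finset.mem_filter, Finset.mem_product] at ha ⊢
      exact ⟨⟨ha.1.2, ha.1.1⟩, fun e => ha.2 e.symm⟩
    · intro a ha; rfl
  rw [← key, Finset.sum_filter, Finset.sum_product]
  refine Finset.sum_congr rfl fun i hi => ?_
  rw [← Finset.sum_filter]
  congr 1
  ext j
  simp [Finset.mem_erase, Finset.mem_filter, and_comm]

lemma keyB {n : ℕ} (hn : 2 ≤ n) (α β γ : ℝ) (hα : 0 ≤ α) (hβ : 0 < β)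
    (x : Fin n → ℝ) (hx0 : 0 ≤ x ⟨0, Nat.lt_of_lt_of_le Nat.zero_lt_two hn⟩) (hsm : StrictMono x) (k : Fin (n-1)) :
    β * (x ⟨k.1+1, Nat.add_lt_of_lt_sub k.isLt⟩ /
      (x ⟨k.1+1, Nat.add_lt_of_lt_sub k.isLt⟩ - x ⟨k.1, Nat.lt_of_lt_of_le k.isLt (Nat.sub_le n 1)⟩)) ≤
    (∑ i, |α - 2 * γ * x i + β * ∑ j ∈ Finset.univ.erase i, (x i + x j)/(x i - x j)|)
      + 2 * |γ| * ∑ i, x i := by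
  classical
  have hpos : ∀ i, 0 ≤ x i := fun i =>
    hx0.trans (hsm.monotone (by simp [Fin.le_def]))
  set K1 : Fin n := ⟨k.1+1, Nat.add_lt_of_lt_sub k.isLt⟩ with hK1
  set K0 : Fin n := ⟨k.1, Nat.lt_of_lt_of_le k.isLt (Nat.sub_le n 1)⟩ with hK0
  set h : Fin n → Fin n → ℝ := fun i j => (x i + x j)/(x i - x j) with hh
  set S : Finset (Fin n) := Finset.univ.filter (fun i : Fin n => k.1 < i.1) with hS
  have hK1S : K1 ∈ S := Finset.mem_filter.2 ⟨Finset.mem_univ _, by simp [hK1]⟩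
  have hK0S : K0 ∈ Finset.univ \ S := by
    refine Finset.mem_sdiff.2 ⟨Finset.mem_univ _, fun hc => ?_⟩
    have := (Finset.mem_filter.1 hc).2
    simp [hK0] at this
  have hanti : ∀ i j, h j i = - h i j := by
    intro i j
    show (x j + x i)/(x j - x i) = -((x i + x j)/(x i - x j))
    rw [show x j - x i = -(x i - x j) by ring, div_neg, add_comm]
  -- step 1 : cancellation
  have hkey : ∑ i ∈ S, ∑ j ∈ Finset.univ.erase i, h i j
      = ∑ i ∈ S, ∑ j ∈ Finset.univ \ S, h i j := by
    have hsplit : ∀ i ∈ S, ∑ j ∈ Finset.univ.erase i, h i j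
        = ∑ j ∈ S.erase i, h i j + ∑ j ∈ Finset.univ \ S, h i j := by
      intro i hi
      have hiS : k.1 < i.1 := (Finset.mem_filter.1 hi).2
      have e1 : (Finset.univ.erase i).filter (fun j => k.1 < j.1) = S.erase i := by
        ext j
        simp only [Finset.mem_filter, Finset.mem_erase, Finset.mem_univ, true_and,
          and_true, hS, ne_eq, Fin.ext_iff]
        try omega
      have e2 : (Finset.univ.erase i).filter (fun j => ¬ k.1 < j.1) = Finset.univ \ S := by
        ext j
        simp only [Finset.mem_filter, Finset.mem_erase, Finset.mem_univ, true_and,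
          and_true, hS, Finset.mem_sdiff, ne_eq, Fin.ext_iff, not_lt]
        omega
      rw [← Finset.sum_filter_add_sum_filter_not (Finset.univ.erase i)
        (fun j => k.1 < j.1) (h i), e1, e2]
    rw [Finset.sum_congr rfl hsplit, Finset.sum_add_distrib,
      antisym_double_sum S h hanti, zero_add]
  have hterm : ∀ i ∈ S, ∀ j ∈ Finset.univ \ S, 0 ≤ h i j := by
    intro i hi j hj
    have hiS : k.1 < i.1 := (Finset.mem_filter.1 hi).2
    have hjS : ¬ k.1 < j.1 := fun hc =>
      (Finset.mem_sdiff.1 hj).2 (Finset.mem_filter.2 ⟨Finset.mem_univ _, hc⟩)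
    have hji : x j < x i := hsm (show j < i by rw [Fin.lt_def]; omega)
    exact div_nonneg (by linarith [hpos j, hpos i]) (by linarith)
  have hsingle : h K1 K0 ≤ ∑ i ∈ S, ∑ j ∈ Finset.univ \ S, h i j := by
    have h1 : h K1 K0 ≤ ∑ j ∈ Finset.univ \ S, h K1 j :=
      Finset.single_le_sum (fun j hj => hterm K1 hK1S j hj) hK0S
    refine h1.trans (Finset.single_le_sum
      (f := fun i => ∑ j ∈ Finset.univ \ S, h i j) (fun i hi => ?_) hK1S)
    exact Finset.sum_nonneg fun j hj => hterm i hi j hj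
  have hK01 : x K0 < x K1 := hsm (by rw [Fin.lt_def]; simp [hK0, hK1])
  have hraw : x K1 / (x K1 - x K0) ≤ h K1 K0 := by
    have hnum : x K1 ≤ x K1 + x K0 := by linarith [hpos K0]
    show x K1 / (x K1 - x K0) ≤ (x K1 + x K0) / (x K1 - x K0)
    gcongr
  have hmain : β * ∑ i ∈ S, ∑ j ∈ Finset.univ.erase i, h i j
      = ∑ i ∈ S, ((α - 2 * γ * x i + β * ∑ j ∈ Finset.univ.erase i, h i j) - α + 2 * γ * x i) := by
    rw [Finset.mul_sum]
    exact Finset.sum_congr rfl fun i _ => by ring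
  calc β * (x K1 / (x K1 - x K0)) ≤ β * h K1 K0 :=
        mul_le_mul_of_nonneg_left hraw hβ.le
    _ ≤ β * ∑ i ∈ S, ∑ j ∈ Finset.univ \ S, h i j :=
        mul_le_mul_of_nonneg_left hsingle hβ.le
    _ = ∑ i ∈ S, ((α - 2 * γ * x i + β * ∑ j ∈ Finset.univ.erase i, h i j) - α + 2 * γ * x i) := by
        rw [← hkey, hmain]
    _ ≤ ∑ i ∈ S, (|α - 2 * γ * x i + β * ∑ j ∈ Finset.univ.erase i, h i j| + 2 * |γ| * x i) := by
        refine Finset.sum_le_sum fun i _ => ?_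
        have h1 := le_abs_self (α - 2 * γ * x i + β * ∑ j ∈ Finset.univ.erase i, h i j)
        have h2 : 2 * γ * x i ≤ 2 * |γ| * x i := by
          have := mul_le_mul_of_nonneg_right (le_abs_self γ) (hpos i)
          linarith
        linarith
    _ ≤ ∑ i, (|α - 2 * γ * x i + β * ∑ j ∈ Finset.univ.erase i, h i j| + 2 * |γ| * x i) := by
        refine Finset.sum_le_sum_of_subset_of_nonneg (Finset.subset_univ S) fun i _ _ => ?_
        have := hpos i
        positivity
    _ = (∑ i, |α - 2 * γ * x i + β * ∑ j ∈ Finset.univ.erase i, h i j|) + 2 * |γ| * ∑ i, x i := by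
        rw [Finset.sum_add_distrib, Finset.mul_sum]

lemma keyA {n : ℕ} (hn : 2 ≤ n) (α β γ : ℝ) (hα : 0 ≤ α) (hβ : 0 < β)
    (x : Fin n → ℝ) (hx0 : 0 ≤ x ⟨0, Nat.lt_of_lt_of_le Nat.zero_lt_two hn⟩) (hsm : StrictMono x) (i : Fin n) :
    |α - 2 * γ * x i + β * ∑ j ∈ Finset.univ.erase i, (x i + x j)/(x i - x j)|
      ≤ α + 2 * |γ| * x i + 2 * β * n *
        ∑ k : Fin (n-1), x ⟨k.1+1, Nat.add_lt_of_lt_sub k.isLt⟩ /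
          (x ⟨k.1+1, Nat.add_lt_of_lt_sub k.isLt⟩ - x ⟨k.1, Nat.lt_of_lt_of_le k.isLt (Nat.sub_le n 1)⟩) := by
  classical
  have hpos : ∀ i, 0 ≤ x i := fun i =>
    hx0.trans (hsm.monotone (by simp [Fin.le_def]))
  set R : ℝ := ∑ k : Fin (n-1), x ⟨k.1+1, Nat.add_lt_of_lt_sub k.isLt⟩ /
      (x ⟨k.1+1, Nat.add_lt_of_lt_sub k.isLt⟩ - x ⟨k.1, Nat.lt_of_lt_of_le k.isLt (Nat.sub_le n 1)⟩) with hR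
  have hrawpos : ∀ k : Fin (n-1),
      0 ≤ x ⟨k.1+1, Nat.add_lt_of_lt_sub k.isLt⟩ /
        (x ⟨k.1+1, Nat.add_lt_of_lt_sub k.isLt⟩ - x ⟨k.1, Nat.lt_of_lt_of_le k.isLt (Nat.sub_le n 1)⟩) := by
    intro k
    have hlt : x ⟨k.1, Nat.lt_of_lt_of_le k.isLt (Nat.sub_le n 1)⟩ < x ⟨k.1+1, Nat.add_lt_of_lt_sub k.isLt⟩ :=
      hsm (by rw [Fin.lt_def]; simp)
    exact div_nonneg (hpos _) (by linarith)
  have hRpos : 0 ≤ R := Finset.sum_nonneg fun k _ => hrawpos k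
  -- bound for a single pair with q < p
  have pair : ∀ p q : Fin n, q.1 < p.1 → (x p + x q)/(x p - x q) ≤ 2 * R := by
    intro p q hqp
    have hp1 : 1 ≤ p.1 := by omega
    set m : Fin (n-1) := ⟨p.1 - 1, by have := p.isLt; omega⟩ with hm
    have e1 : (⟨m.1+1, Nat.add_lt_of_lt_sub m.isLt⟩ : Fin n) = p := Fin.ext (by simp [hm]; omega)
    have hql : x q ≤ x ⟨m.1, Nat.lt_of_lt_of_le m.isLt (Nat.sub_le n 1)⟩ :=
      hsm.monotone (by rw [Fin.le_def]; simp [hm]; omega)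
    have hml : x ⟨m.1, Nat.lt_of_lt_of_le m.isLt (Nat.sub_le n 1)⟩ < x p :=
      hsm (by rw [Fin.lt_def]; simp [hm]; omega)
    have hqp' : x q < x p := hsm (by rw [Fin.lt_def]; omega)
    have h1 : (x p + x q)/(x p - x q)
        ≤ (2 * x p)/(x p - x ⟨m.1, Nat.lt_of_lt_of_le m.isLt (Nat.sub_le n 1)⟩) := by
      apply div_le_div₀ (by linarith [hpos p]) (by linarith [hpos q, hpos p]) (by linarith)
      linarith
    have h2 : (2 * x p)/(x p - x ⟨m.1, Nat.lt_of_lt_of_le m.isLt (Nat.sub_le n 1)⟩)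
        = 2 * (x ⟨m.1+1, Nat.add_lt_of_lt_sub m.isLt⟩ /
            (x ⟨m.1+1, Nat.add_lt_of_lt_sub m.isLt⟩ - x ⟨m.1, Nat.lt_of_lt_of_le m.isLt (Nat.sub_le n 1)⟩)) := by
      rw [e1, mul_div_assoc]
    have h3 : x ⟨m.1+1, Nat.add_lt_of_lt_sub m.isLt⟩ /
        (x ⟨m.1+1, Nat.add_lt_of_lt_sub m.isLt⟩ - x ⟨m.1, Nat.lt_of_lt_of_le m.isLt (Nat.sub_le n 1)⟩) ≤ R :=
      Finset.single_le_sum (fun k _ => hrawpos k) (Finset.mem_univ m)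
    calc (x p + x q)/(x p - x q) ≤ _ := h1
      _ = _ := h2
      _ ≤ 2 * R := by linarith
  have habs : ∀ j ∈ Finset.univ.erase i, |(x i + x j)/(x i - x j)| ≤ 2 * R := by
    intro j hj
    have hne : j ≠ i := (Finset.mem_erase.1 hj).1
    rcases lt_or_gt_of_ne (fun e => hne (Fin.ext e) : j.1 ≠ i.1) with hlt | hgt
    · have hxx : x j < x i := hsm (by rw [Fin.lt_def]; omega)
      rw [abs_of_nonneg (div_nonneg (by linarith [hpos j, hpos i]) (by linarith))]
      exact pair i j hlt
    · have hxx : x i < x j := hsm (by rw [Fin.lt_def]; omega)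
      have : (x i + x j)/(x i - x j) = -((x j + x i)/(x j - x i)) := by
        rw [show x i - x j = -(x j - x i) by ring, div_neg, add_comm]
      rw [this, abs_neg,
        abs_of_nonneg (div_nonneg (by linarith [hpos j, hpos i]) (by linarith))]
      exact pair j i hgt
  have hsumabs : |∑ j ∈ Finset.univ.erase i, (x i + x j)/(x i - x j)|
      ≤ (n : ℝ) * (2 * R) := by
    refine (Finset.abs_sum_le_sum_abs _ _).trans ?_
    refine (Finset.sum_le_sum habs).trans ?_
    rw [Finset.sum_const, nsmul_eq_mul, Finset.card_erase_of_mem (Finset.mem_univ i),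
      Finset.card_univ, Fintype.card_fin]
    have hcast : ((n - 1 : ℕ) : ℝ) ≤ (n : ℝ) := by
      have : (n - 1 : ℕ) ≤ n := by omega
      exact_mod_cast this
    nlinarith
  have htri : |α - 2 * γ * x i + β * ∑ j ∈ Finset.univ.erase i, (x i + x j)/(x i - x j)|
      ≤ |α| + |2 * γ * x i| + |β * ∑ j ∈ Finset.univ.erase i, (x i + x j)/(x i - x j)| := by
    calc |α - 2 * γ * x i + β * ∑ j ∈ Finset.univ.erase i, (x i + x j)/(x i - x j)|
        ≤ |α - 2 * γ * x i| + |β * ∑ j ∈ Finset.univ.erase i, (x i + x j)/(x i - x j)| :=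
          abs_add_le _ _
      _ ≤ _ := by
          have := abs_sub (α) (2 * γ * x i)
          linarith [abs_sub_abs_le_abs_sub α (2 * γ * x i), abs_sub α (2 * γ * x i)]
  have h4 : |α| = α := abs_of_nonneg hα
  have h5 : |2 * γ * x i| ≤ 2 * |γ| * x i := by
    rw [abs_mul, abs_mul]
    simp only [abs_two, abs_of_nonneg (hpos i)]
    exact le_rfl
  have h6 : |β * ∑ j ∈ Finset.univ.erase i, (x i + x j)/(x i - x j)|
      ≤ β * ((n : ℝ) * (2 * R)) := by
    rw [abs_mul, abs_of_nonneg hβ.le]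
    exact mul_le_mul_of_nonneg_left hsumabs hβ.le
  have h7 : β * ((n : ℝ) * (2 * R)) = 2 * β * (n : ℝ) * R := by ring
  linarith

lemma raw_nonneg {n : ℕ} (hn : 2 ≤ n) (x : Fin n → ℝ) (hx0 : 0 ≤ x ⟨0, Nat.lt_of_lt_of_le Nat.zero_lt_two hn⟩)
    (hsm : StrictMono x) (k : Fin (n-1)) :
    0 ≤ x ⟨k.1+1, Nat.add_lt_of_lt_sub k.isLt⟩ /
      (x ⟨k.1+1, Nat.add_lt_of_lt_sub k.isLt⟩ - x ⟨k.1, Nat.lt_of_lt_of_le k.isLt (Nat.sub_le n 1)⟩) := by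
  have hpos : ∀ i, 0 ≤ x i := fun i =>
    hx0.trans (hsm.monotone (by simp [Fin.le_def]))
  have hlt : x ⟨k.1, Nat.lt_of_lt_of_le k.isLt (Nat.sub_le n 1)⟩ < x ⟨k.1+1, Nat.add_lt_of_lt_sub k.isLt⟩ :=
    hsm (by rw [Fin.lt_def]; simp)
  exact div_nonneg (hpos _) (by linarith)

/-- Lemma 3.2 of the paper: for a continuous trajectory with ordered nonnegative
coordinates which are a.e. strictly ordered, integrability of the consecutive
interaction terms is equivalent to integrability of the full drift of the
eigenvalue SDE. -/
theorem stmt_0 (n : ℕ) (hn : 2 ≤ n) (α β γ : ℝ) (hα : 0 ≤ α) (hβ : 0 < β)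
    (f : ℝ → Fin n → ℝ)
    (hcont : ContinuousOn f (Set.Ici 0))
    (hord : ∀ t ∈ Set.Ici (0:ℝ), 0 ≤ f t ⟨0, by omega⟩ ∧ Monotone (f t))
    (hstrict : ∀ᵐ t ∂(volume.restrict (Set.Ici (0:ℝ))),
      0 ≤ f t ⟨0, by omega⟩ ∧ StrictMono (f t)) :
    ∀ t : ℝ, 0 ≤ t →
      ((∑ i : Fin (n-1),
          ∫⁻ s in Set.Ioc (0:ℝ) t,
            ENNReal.ofReal
              (f s ⟨i.1+1, by have := i.isLt; omega⟩ /
                (f s ⟨i.1+1, by have := i.isLt; omega⟩ -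
                  f s ⟨i.1, by have := i.isLt; omega⟩))) < ⊤
        ↔
       (∑ i : Fin n,
          ∫⁻ s in Set.Ioc (0:ℝ) t,
            ENNReal.ofReal
              |α - 2*γ*(f s i) + β * ∑ j ∈ Finset.univ.erase i,
                  (f s i + f s j) / (f s i - f s j)|) < ⊤) := by
  intro t ht
  classical
  have hsub : Set.Ioc (0:ℝ) t ⊆ Set.Ici (0:ℝ) := fun s hs => le_of_lt hs.1
  set μ := volume.restrict (Set.Ioc (0:ℝ) t) with hμ
  -- measurability of coordinates
  have hmeasf : ∀ i : Fin n, AEMeasurable (fun s => f s i) μ := by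
    intro i
    exact ContinuousOn.aemeasurable
      ((continuous_apply i).comp_continuousOn (hcont.mono hsub)) measurableSet_Ioc
  have hmeasD : ∀ i : Fin n, AEMeasurable (fun s =>
      ENNReal.ofReal |α - 2*γ*(f s i) + β * ∑ j ∈ Finset.univ.erase i,
        (f s i + f s j) / (f s i - f s j)|) μ := by
    intro i
    have ha : AEMeasurable (fun s => α - 2*γ*(f s i)) μ :=
      AEMeasurable.sub aemeasurable_const ((hmeasf i).const_mul (2*γ))
    have hb : AEMeasurable (fun s => β * ∑ j ∈ Finset.univ.erase i,
        (f s i + f s j) / (f s i - f s j)) μ :=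
      (Finset.aemeasurable_fun_sum _ (fun j _ =>
        ((hmeasf i).add (hmeasf j)).div ((hmeasf i).sub (hmeasf j)))).const_mul β
    exact (continuous_abs.measurable.comp_aemeasurable (ha.add hb)).ennreal_ofReal
  have hmeasraw : ∀ k : Fin (n-1), AEMeasurable (fun s =>
      ENNReal.ofReal (f s ⟨k.1+1, by have := k.isLt; omega⟩ /
        (f s ⟨k.1+1, by have := k.isLt; omega⟩ - f s ⟨k.1, by have := k.isLt; omega⟩))) μ := by
    intro k
    exact AEMeasurable.ennreal_ofReal <| (hmeasf _).div ((hmeasf _).sub (hmeasf _))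
  -- bound on [0, t]
  obtain ⟨C, hC⟩ : ∃ C, ∀ s ∈ Set.Icc (0:ℝ) t, ‖f s ⟨n-1, by omega⟩‖ ≤ C :=
    IsCompact.exists_bound_of_continuousOn isCompact_Icc
      ((continuous_apply _).comp_continuousOn (hcont.mono Set.Icc_subset_Ici_self))
  have hbound : ∀ s ∈ Set.Ioc (0:ℝ) t, ∀ i, f s i ≤ C := by
    intro s hs i
    have hs' : s ∈ Set.Ici (0:ℝ) := hsub hs
    have hmono := (hord s hs').2
    have h1 : f s i ≤ f s ⟨n-1, by omega⟩ :=
      hmono (by rw [Fin.le_def]; have := i.isLt; simp; omega)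
    exact h1.trans ((le_abs_self _).trans (hC s ⟨le_of_lt hs.1, hs.2⟩))
  have hC0 : 0 ≤ C := by
    have h0 : (0:ℝ) ∈ Set.Icc (0:ℝ) t := ⟨le_refl _, ht⟩
    exact (norm_nonneg _).trans (hC 0 h0)
  -- a.e. facts
  have hae : ∀ᵐ s ∂μ, (0 ≤ f s ⟨0, by omega⟩ ∧ StrictMono (f s)) ∧ s ∈ Set.Ioc (0:ℝ) t :=
    (ae_restrict_of_ae_restrict_of_subset hsub hstrict).and
      (ae_restrict_mem measurableSet_Ioc)
  have hμfin : μ Set.univ < ⊤ := by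
    rw [Measure.restrict_apply_univ]
    exact measure_Ioc_lt_top
  constructor
  · -- forward
    intro hA
    rw [ENNReal.sum_lt_top]
    intro i _
    have hpt : ∀ᵐ s ∂μ,
        ENNReal.ofReal |α - 2*γ*(f s i) + β * ∑ j ∈ Finset.univ.erase i,
            (f s i + f s j) / (f s i - f s j)|
          ≤ ENNReal.ofReal (α + 2 * |γ| * C) + ENNReal.ofReal (2 * β * n) *
            ∑ k : Fin (n-1), ENNReal.ofReal
              (f s ⟨k.1+1, by have := k.isLt; omega⟩ /
                (f s ⟨k.1+1, by have := k.isLt; omega⟩ - f s ⟨k.1, by have := k.isLt; omega⟩)) := by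
      filter_upwards [hae] with s hs
      obtain ⟨⟨h0, hsmo⟩, hmem⟩ := hs
      have hkA := keyA hn α β γ hα hβ (f s) h0 hsmo i
      set R : ℝ := ∑ k : Fin (n-1), f s ⟨k.1+1, by have := k.isLt; omega⟩ /
          (f s ⟨k.1+1, by have := k.isLt; omega⟩ - f s ⟨k.1, by have := k.isLt; omega⟩) with hRdef
      have hRpos : 0 ≤ R := Finset.sum_nonneg fun k _ => raw_nonneg hn (f s) h0 hsmo k
      have hb := hbound s hmem i
      have hfpos : 0 ≤ f s i := h0.trans (hsmo.monotone (by simp [Fin.le_def]))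
      have step1 : |α - 2*γ*(f s i) + β * ∑ j ∈ Finset.univ.erase i,
          (f s i + f s j) / (f s i - f s j)| ≤ (α + 2 * |γ| * C) + (2 * β * n) * R := by
        have h2 : 2 * |γ| * f s i ≤ 2 * |γ| * C := by
          have := mul_le_mul_of_nonneg_left hb (by positivity : (0:ℝ) ≤ 2 * |γ|)
          linarith
        linarith [hkA]
      calc ENNReal.ofReal _ ≤ ENNReal.ofReal ((α + 2 * |γ| * C) + (2 * β * n) * R) :=
            ENNReal.ofReal_le_ofReal step1
        _ ≤ ENNReal.ofReal (α + 2 * |γ| * C) + ENNReal.ofReal ((2 * β * n) * R) :=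
            ENNReal.ofReal_add_le
        _ = ENNReal.ofReal (α + 2 * |γ| * C) + ENNReal.ofReal (2 * β * n) * ENNReal.ofReal R := by
            rw [ENNReal.ofReal_mul (by positivity)]
        _ = _ := by
            rw [hRdef, ENNReal.ofReal_sum_of_nonneg
              (fun k _ => raw_nonneg hn (f s) h0 hsmo k)]
    calc (∫⁻ s in Set.Ioc (0:ℝ) t, ENNReal.ofReal |α - 2*γ*(f s i) + β *
          ∑ j ∈ Finset.univ.erase i, (f s i + f s j) / (f s i - f s j)|)
        ≤ ∫⁻ s, (ENNReal.ofReal (α + 2 * |γ| * C) + ENNReal.ofReal (2 * β * n) *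
            ∑ k : Fin (n-1), ENNReal.ofReal
              (f s ⟨k.1+1, by have := k.isLt; omega⟩ /
                (f s ⟨k.1+1, by have := k.isLt; omega⟩ - f s ⟨k.1, by have := k.isLt; omega⟩))) ∂μ :=
          lintegral_mono_ae hpt
      _ = ENNReal.ofReal (α + 2 * |γ| * C) * μ Set.univ + ENNReal.ofReal (2 * β * n) *
            ∑ k : Fin (n-1), ∫⁻ s, ENNReal.ofReal
              (f s ⟨k.1+1, by have := k.isLt; omega⟩ /
                (f s ⟨k.1+1, by have := k.isLt; omega⟩ - f s ⟨k.1, by have := k.isLt; omega⟩)) ∂μ := by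
          rw [lintegral_add_left measurable_const, lintegral_const,
            lintegral_const_mul' _ _ ENNReal.ofReal_ne_top,
            lintegral_finset_sum' _ (fun k _ => hmeasraw k)]
      _ < ⊤ := by
          apply ENNReal.add_lt_top.2
          constructor
          · exact ENNReal.mul_lt_top ENNReal.ofReal_lt_top hμfin
          · exact ENNReal.mul_lt_top ENNReal.ofReal_lt_top hA
  · -- backward
    intro hB
    rw [ENNReal.sum_lt_top]
    intro k _
    have hpt : ∀ᵐ s ∂μ,
        ENNReal.ofReal (f s ⟨k.1+1, by have := k.isLt; omega⟩ /
          (f s ⟨k.1+1, by have := k.isLt; omega⟩ - f s ⟨k.1, by have := k.isLt; omega⟩))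
        ≤ ENNReal.ofReal β⁻¹ * ∑ i : Fin n, ENNReal.ofReal
            |α - 2*γ*(f s i) + β * ∑ j ∈ Finset.univ.erase i,
              (f s i + f s j) / (f s i - f s j)|
          + ENNReal.ofReal (β⁻¹ * (2 * |γ| * n * C)) := by
      filter_upwards [hae] with s hs
      obtain ⟨⟨h0, hsmo⟩, hmem⟩ := hs
      have hkB := keyB hn α β γ hα hβ (f s) h0 hsmo k
      set T : ℝ := ∑ i : Fin n, |α - 2*γ*(f s i) + β * ∑ j ∈ Finset.univ.erase i,
          (f s i + f s j) / (f s i - f s j)| with hT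
      have hT0 : 0 ≤ T := Finset.sum_nonneg fun i _ => abs_nonneg _
      have hsum : ∑ i : Fin n, f s i ≤ n * C := by
        calc ∑ i : Fin n, f s i ≤ ∑ _i : Fin n, C :=
              Finset.sum_le_sum fun i _ => hbound s hmem i
          _ = n * C := by rw [Finset.sum_const, nsmul_eq_mul, Finset.card_univ, Fintype.card_fin]
      have hsum0 : 0 ≤ ∑ i : Fin n, f s i := Finset.sum_nonneg fun i _ =>
        h0.trans (hsmo.monotone (by simp [Fin.le_def]))
      have step1 : f s ⟨k.1+1, by have := k.isLt; omega⟩ /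
          (f s ⟨k.1+1, by have := k.isLt; omega⟩ - f s ⟨k.1, by have := k.isLt; omega⟩)
          ≤ β⁻¹ * T + β⁻¹ * (2 * |γ| * n * C) := by
        have h2 : 2 * |γ| * ∑ i : Fin n, f s i ≤ 2 * |γ| * (n * C) := by
          have := mul_le_mul_of_nonneg_left hsum (by positivity : (0:ℝ) ≤ 2 * |γ|)
          linarith
        have h3 : β * (f s ⟨k.1+1, by have := k.isLt; omega⟩ /
            (f s ⟨k.1+1, by have := k.isLt; omega⟩ - f s ⟨k.1, by have := k.isLt; omega⟩))
            ≤ T + 2 * |γ| * (n * C) := by linarith [hkB]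
        have h4 := mul_le_mul_of_nonneg_left h3 (by positivity : (0:ℝ) ≤ β⁻¹)
        rw [← mul_assoc, inv_mul_cancel₀ (ne_of_gt hβ), one_mul] at h4
        calc _ ≤ β⁻¹ * (T + 2 * |γ| * (n * C)) := h4
          _ = β⁻¹ * T + β⁻¹ * (2 * |γ| * n * C) := by ring
      calc ENNReal.ofReal _ ≤ ENNReal.ofReal (β⁻¹ * T + β⁻¹ * (2 * |γ| * n * C)) :=
            ENNReal.ofReal_le_ofReal step1
        _ ≤ ENNReal.ofReal (β⁻¹ * T) + ENNReal.ofReal (β⁻¹ * (2 * |γ| * n * C)) :=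
            ENNReal.ofReal_add_le
        _ = ENNReal.ofReal β⁻¹ * ENNReal.ofReal T + ENNReal.ofReal (β⁻¹ * (2 * |γ| * n * C)) := by
            rw [ENNReal.ofReal_mul (by positivity)]
        _ = _ := by
            rw [hT, ENNReal.ofReal_sum_of_nonneg (fun i _ => abs_nonneg _)]
    calc (∫⁻ s in Set.Ioc (0:ℝ) t, ENNReal.ofReal
          (f s ⟨k.1+1, by have := k.isLt; omega⟩ /
            (f s ⟨k.1+1, by have := k.isLt; omega⟩ - f s ⟨k.1, by have := k.isLt; omega⟩)))
        ≤ ∫⁻ s, (ENNReal.ofReal β⁻¹ * ∑ i : Fin n, ENNReal.ofReal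
            |α - 2*γ*(f s i) + β * ∑ j ∈ Finset.univ.erase i,
              (f s i + f s j) / (f s i - f s j)|
          + ENNReal.ofReal (β⁻¹ * (2 * |γ| * n * C))) ∂μ := lintegral_mono_ae hpt
      _ = ENNReal.ofReal β⁻¹ * ∑ i : Fin n, (∫⁻ s, ENNReal.ofReal
            |α - 2*γ*(f s i) + β * ∑ j ∈ Finset.univ.erase i,
              (f s i + f s j) / (f s i - f s j)| ∂μ)
          + ENNReal.ofReal (β⁻¹ * (2 * |γ| * n * C)) * μ Set.univ := by
          rw [lintegral_add_right _ measurable_const, lintegral_const,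
            lintegral_const_mul' _ _ ENNReal.ofReal_ne_top,
            lintegral_finset_sum' _ (fun i _ => hmeasD i)]
      _ < ⊤ := by
          apply ENNReal.add_lt_top.2
          constructor
          · exact ENNReal.mul_lt_top ENNReal.ofReal_lt_top hB
          · exact ENNReal.mul_lt_top ENNReal.ofReal_lt_top hμfin
end

section
/- Define sgn(x) = 1 if x > 0 and sgn(x) = −1 if x ≤ 0. Let a, b, ã, b̃ be real numbers with 0 ≤ a < b and 0 ≤ ã < b̃. Then ( (a+b)/(a−b) − (ã+b̃)/(ã−b̃) ) · ( sgn(a−ã) − sgn(b−b̃) ) ≤ 0. -/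
/-- Equation (3.3) of the paper: the sign inequality used in the proof of
pathwise uniqueness (Lemma 3.1) for the eigenvalue SDE. -/
theorem stmt_4 (a b a' b' : ℝ) (ha : 0 ≤ a) (hab : a < b)
    (ha' : 0 ≤ a') (hab' : a' < b')
    (sgn : ℝ → ℝ) (hsgn : ∀ x, sgn x = if 0 < x then 1 else -1) :
    ((a + b) / (a - b) - (a' + b') / (a' - b')) *
        (sgn (a - a') - sgn (b - b')) ≤ 0 := by
  have hb' : 0 < b' := ha'.trans_lt hab'
  have hb : 0 < b := ha.trans_lt hab
  have h1 : a - b ≠ 0 := by linarith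
  have h2 : a' - b' ≠ 0 := by linarith
  have e1 : (a+b)/(a-b) * (a-b) = a+b := div_mul_cancel₀ _ h1
  have e2 : (a'+b')/(a'-b') * (a'-b') = a'+b' := div_mul_cancel₀ _ h2
  have hd : 0 < (b - a) * (b' - a') := mul_pos (by linarith) (by linarith)
  rw [hsgn, hsgn]
  split_ifs with h3 h4 h4
  · simp
  · push_neg at h4
    nlinarith [e1, e2, hd, mul_nonneg ha' (sub_nonneg.2 h4), mul_pos hb' (sub_pos.2 (by linarith : a' < a))]
  · push_neg at h3
    nlinarith [e1, e2, hd, mul_nonneg ha (by linarith : (0:ℝ) ≤ b - b'), mul_nonneg hb.le (by linarith : (0:ℝ) ≤ a' - a)]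
  · simp
end

section
/- Let n ≥ 2, 0 < β < 1, γ > 0 and α a real number with α − (n−1)β > 0, and let F(λ₁,…,λₙ) = ∏_{i=1}^n λ_i^{(α−(n−1)β)/2 − 1} e^{−γ λ_i} · ∏_{1≤i<j≤n} (λ_j − λ_i)^β. Then for all indices 1 ≤ j < i ≤ n, the integral ∫_{0 ≤ λ₁ ≤ … ≤ λₙ} ((λ_i + λ_j)/(λ_i − λ_j)) · F(λ₁,…,λₙ) dλ₁ … dλₙ is finite. -/
open MeasureTheory Finset Real Set
open scoped ENNReal NNReal

namespace Stmt8


lemma poly_le_exp (N : ℕ) {δ : ℝ} (hδ : 0 < δ) :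
    ∃ C : ℝ, 1 ≤ C ∧ ∀ t : ℝ, 0 ≤ t → (1 + t) ^ N ≤ C * Real.exp (δ * t) := by
  rcases Nat.eq_zero_or_pos N with hN | hN
  · refine ⟨1, le_rfl, fun t ht => ?_⟩
    simp only [hN, pow_zero, one_mul]
    exact Real.one_le_exp (by positivity)
  · set c : ℝ := max 1 ((N : ℝ) / δ) with hc
    have hc1 : 1 ≤ c := le_max_left _ _
    have hc0 : 0 < c := lt_of_lt_of_le one_pos hc1
    refine ⟨c ^ N, one_le_pow₀ hc1, fun t ht => ?_⟩
    have hN0 : (0 : ℝ) < N := by exact_mod_cast hN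
    have h1 : 1 + t ≤ c * Real.exp (δ / N * t) := by
      have h2 : 1 + (δ / N) * t ≤ Real.exp (δ / N * t) := by
        have := Real.add_one_le_exp ((δ / N) * t); linarith
      have hcn : 1 ≤ c * (δ / N) := by
        have h3 : (N : ℝ) / δ ≤ c := le_max_right _ _
        have h4 : 0 < δ / N := by positivity
        calc (1 : ℝ) = ((N : ℝ) / δ) * (δ / N) := by field_simp
          _ ≤ c * (δ / N) := by exact mul_le_mul_of_nonneg_right h3 h4.le
      have h5 : 1 + t ≤ c * (1 + (δ / N) * t) := by
        have : c * (1 + (δ / N) * t) = c + (c * (δ / N)) * t := by ring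
        rw [this]
        have := mul_le_mul_of_nonneg_right hcn ht
        linarith
      calc 1 + t ≤ c * (1 + (δ / N) * t) := h5
        _ ≤ c * Real.exp (δ / N * t) := by
            exact mul_le_mul_of_nonneg_left h2 hc0.le
    calc (1 + t) ^ N ≤ (c * Real.exp (δ / N * t)) ^ N := by
          exact pow_le_pow_left₀ (by linarith) h1 N
      _ = c ^ N * Real.exp (δ * t) := by
          rw [mul_pow, ← Real.exp_nat_mul]
          congr 2
          field_simp

lemma rpoly_le_exp {s δ : ℝ} (hs : 0 ≤ s) (hδ : 0 < δ) :
    ∃ C : ℝ, 1 ≤ C ∧ ∀ t : ℝ, 0 ≤ t → (1 + t) ^ s ≤ C * Real.exp (δ * t) := by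
  obtain ⟨C, hC1, hC⟩ := poly_le_exp ⌈s⌉₊ hδ
  refine ⟨C, hC1, fun t ht => ?_⟩
  calc (1 + t) ^ s ≤ (1 + t) ^ ((⌈s⌉₊ : ℝ)) :=
        Real.rpow_le_rpow_of_exponent_le (by linarith) (Nat.le_ceil s)
    _ = (1 + t) ^ (⌈s⌉₊) := by rw [Real.rpow_natCast]
    _ ≤ C * Real.exp (δ * t) := hC t ht

lemma gamma_fin {s c : ℝ} (hs : 0 < s) (hc : 0 < c) :
    (∫⁻ t : ℝ, (if 0 ≤ t then ENNReal.ofReal (t ^ (s - 1) * Real.exp (-c * t)) else 0)) < ⊤ := by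
  have hint : IntegrableOn (fun t : ℝ => t ^ (s - 1) * Real.exp (-c * t)) (Ioi 0) := by
    have h := integrableOn_rpow_mul_exp_neg_mul_rpow (p := 1) (s := s - 1) (b := c)
      (by linarith) one_pos hc
    refine h.congr_fun (fun x hx => ?_) measurableSet_Ioi
    simp only [Real.rpow_one]
  have heq : ∀ t : ℝ, (if 0 ≤ t then ENNReal.ofReal (t ^ (s - 1) * Real.exp (-c * t)) else 0)
      = (Ici (0:ℝ)).indicator (fun t => ENNReal.ofReal (t ^ (s - 1) * Real.exp (-c * t))) t := by
    intro t
    by_cases ht : 0 ≤ t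
    · rw [if_pos ht, Set.indicator_of_mem (Set.mem_Ici.mpr ht)]
    · rw [if_neg ht, Set.indicator_of_notMem (fun h => ht (Set.mem_Ici.mp h))]
  calc (∫⁻ t : ℝ, (if 0 ≤ t then ENNReal.ofReal (t ^ (s - 1) * Real.exp (-c * t)) else 0))
      = ∫⁻ t in Set.Ici (0:ℝ), ENNReal.ofReal (t ^ (s - 1) * Real.exp (-c * t)) := by
        simp_rw [heq]; exact lintegral_indicator measurableSet_Ici _
    _ = ∫⁻ t in Set.Ioi (0:ℝ), ENNReal.ofReal (t ^ (s - 1) * Real.exp (-c * t)) := by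
        exact (setLIntegral_congr (Ioi_ae_eq_Ici (a := (0:ℝ))).symm)
    _ ≤ ∫⁻ t in Set.Ioi (0:ℝ), (‖t ^ (s - 1) * Real.exp (-c * t)‖₊ : ℝ≥0∞) := by
        refine lintegral_mono fun t => ?_
        exact Real.ofReal_le_enorm _
    _ < ⊤ := hint.2



lemma lmarginal_const_mul {n : ℕ} (s : Finset (Fin n)) (c : ℝ≥0∞) (hc : c ≠ ⊤)
    (f : (Fin n → ℝ) → ℝ≥0∞) (x : Fin n → ℝ) :
    (∫⋯∫⁻_s, (fun l => c * f l) ∂(fun _ => (volume : Measure ℝ))) x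
      = c * (∫⋯∫⁻_s, f ∂(fun _ => (volume : Measure ℝ))) x := by
  simp only [lmarginal]
  exact lintegral_const_mul' c _ hc

lemma lmarginal_mul_of_not_mem {n : ℕ} {s : Finset (Fin n)} {a : Fin n} (ha : a ∉ s)
    (g : ℝ → ℝ≥0∞) (h : (Fin n → ℝ) → ℝ≥0∞) (hh : Measurable h) (x : Fin n → ℝ) :
    (∫⋯∫⁻_s, (fun l => g (l a) * h l) ∂(fun _ => (volume : Measure ℝ))) x
      = g (x a) * (∫⋯∫⁻_s, h ∂(fun _ => (volume : Measure ℝ))) x := by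
  simp only [lmarginal]
  have hup : ∀ y : (k : s) → ℝ, Function.updateFinset x s y a = x a := by
    intro y
    simp [Function.updateFinset_def, ha]
  simp_rw [hup]
  rw [lintegral_const_mul]
  exact hh.comp measurable_updateFinset

lemma lmarginal_prod {n : ℕ} (g : ℝ → ℝ≥0∞) (hg : Measurable g) (s : Finset (Fin n)) :
    ∀ x : Fin n → ℝ,
      (∫⋯∫⁻_s, (fun l => ∏ k ∈ s, g (l k)) ∂(fun _ => (volume : Measure ℝ))) x
        = ∏ k ∈ s, ∫⁻ t, g t := by
  induction s using Finset.induction with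
  | empty => intro x; simp
  | @insert a s ha ih =>
    intro x
    have hfun : (fun l : Fin n → ℝ => ∏ k ∈ insert a s, g (l k))
        = fun l => g (l a) * ∏ k ∈ s, g (l k) := by
      funext l; exact Finset.prod_insert ha
    have hmeas : Measurable (fun l : Fin n → ℝ => ∏ k ∈ insert a s, g (l k)) := by
      exact Finset.measurable_prod _ (fun k _ => hg.comp (measurable_pi_apply k))
    have hmeas' : Measurable (fun l : Fin n → ℝ => ∏ k ∈ s, g (l k)) := by
      exact Finset.measurable_prod _ (fun k _ => hg.comp (measurable_pi_apply k))
    rw [MeasureTheory.lmarginal_insert _ hmeas ha]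
    simp_rw [hfun]
    have : ∀ y : ℝ,
        (∫⋯∫⁻_s, (fun l => g (l a) * ∏ k ∈ s, g (l k))
            ∂(fun _ => (volume : Measure ℝ))) (Function.update x a y)
          = g y * ∏ k ∈ s, ∫⁻ t, g t := by
      intro y
      rw [lmarginal_mul_of_not_mem ha g _ hmeas' (Function.update x a y),
        Function.update_self, ih]
    simp_rw [this]
    rw [lintegral_mul_const _ hg, Finset.prod_insert ha]

lemma kernel_bound {a β δ : ℝ} (ha : 0 < a) (hβ0 : 0 < β) (hβ1 : β < 1) (hδ : 0 < δ) :
    ∃ K : ℝ≥0∞, K ≠ ⊤ ∧ ∀ x : ℝ,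
      (∫⁻ y : ℝ, (if 0 ≤ x ∧ x ≤ y then ENNReal.ofReal
          ((y - x) ^ (β - 1) * (x ^ (a - 1) * Real.exp (-δ * x))
            * (y ^ a * Real.exp (-δ * y))) else 0))
        ≤ K * (if 0 ≤ x then ENNReal.ofReal (x ^ (a - 1) * Real.exp (-δ * x)) else 0) := by
  have hδ2 : 0 < δ / 2 := by linarith
  obtain ⟨C, hC1, hC⟩ := rpoly_le_exp (le_of_lt ha) hδ2
  set Iβ : ℝ≥0∞ := ∫⁻ u : ℝ, (if 0 ≤ u then
      ENNReal.ofReal (u ^ (β - 1) * Real.exp (-(δ / 2) * u)) else 0) with hIβ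
  have hIβfin : Iβ < ⊤ := gamma_fin hβ0 hδ2
  refine ⟨ENNReal.ofReal (C ^ 2) * Iβ, by
      exact ENNReal.mul_ne_top ENNReal.ofReal_ne_top hIβfin.ne, fun x => ?_⟩
  by_cases hx : 0 ≤ x
  swap
  · have : ∀ y : ℝ, (if 0 ≤ x ∧ x ≤ y then ENNReal.ofReal
        ((y - x) ^ (β - 1) * (x ^ (a - 1) * Real.exp (-δ * x))
          * (y ^ a * Real.exp (-δ * y))) else 0) = 0 := by
      intro y; rw [if_neg (fun h => hx h.1)]
    simp_rw [this, lintegral_zero]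
    exact zero_le
  -- translation
  set f : ℝ → ℝ≥0∞ := fun y => (if 0 ≤ x ∧ x ≤ y then ENNReal.ofReal
      ((y - x) ^ (β - 1) * (x ^ (a - 1) * Real.exp (-δ * x))
        * (y ^ a * Real.exp (-δ * y))) else 0) with hf
  have htrans : (∫⁻ y, f y) = ∫⁻ u, f (u + x) := (lintegral_add_right_eq_self f x).symm
  rw [htrans]
  have hbound : ∀ u : ℝ, f (u + x)
      ≤ (ENNReal.ofReal (C ^ 2) * ENNReal.ofReal (x ^ (a - 1) * Real.exp (-δ * x)))
        * (if 0 ≤ u then ENNReal.ofReal (u ^ (β - 1) * Real.exp (-(δ / 2) * u)) else 0) := by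
    intro u
    by_cases hu : 0 ≤ u
    · rw [hf]
      simp only
      rw [if_pos ⟨hx, by linarith⟩, if_pos hu, add_sub_cancel_right]
      rw [← ENNReal.ofReal_mul (by positivity), ← ENNReal.ofReal_mul (by positivity)]
      apply ENNReal.ofReal_le_ofReal
      have key : (u + x) ^ a * Real.exp (-δ * (u + x))
          ≤ C ^ 2 * Real.exp (-(δ / 2) * u) := by
        have h1 : (u + x) ^ a ≤ (1 + u) ^ a * (1 + x) ^ a := by
          rw [← Real.mul_rpow (by linarith) (by linarith)]
          apply Real.rpow_le_rpow (by linarith) (by nlinarith) ha.le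
        have h2 : (1 + u) ^ a ≤ C * Real.exp (δ / 2 * u) := hC u hu
        have h3 : (1 + x) ^ a ≤ C * Real.exp (δ / 2 * x) := hC x hx
        have h4 : (u + x) ^ a ≤ (C * Real.exp (δ / 2 * u)) * (C * Real.exp (δ / 2 * x)) := by
          calc (u + x) ^ a ≤ (1 + u) ^ a * (1 + x) ^ a := h1
            _ ≤ (C * Real.exp (δ / 2 * u)) * (C * Real.exp (δ / 2 * x)) := by
                apply mul_le_mul h2 h3 (Real.rpow_nonneg (by linarith) a)
                positivity
        have h5 : 0 < Real.exp (-δ * (u + x)) := Real.exp_pos _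
        have h6 : Real.exp (δ / 2 * u) * Real.exp (δ / 2 * x) * Real.exp (-δ * (u + x))
            = Real.exp (-(δ / 2) * u) * Real.exp (-(δ / 2) * x) := by
          rw [← Real.exp_add, ← Real.exp_add, ← Real.exp_add]
          congr 1
          ring
        have h7 : Real.exp (-(δ / 2) * x) ≤ 1 := by
          rw [Real.exp_le_one_iff]
          nlinarith
        calc (u + x) ^ a * Real.exp (-δ * (u + x))
            ≤ ((C * Real.exp (δ / 2 * u)) * (C * Real.exp (δ / 2 * x)))
              * Real.exp (-δ * (u + x)) := by
              exact mul_le_mul_of_nonneg_right h4 h5.le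
          _ = C ^ 2 * (Real.exp (-(δ / 2) * u) * Real.exp (-(δ / 2) * x)) := by
              rw [show ((C * Real.exp (δ / 2 * u)) * (C * Real.exp (δ / 2 * x)))
                  * Real.exp (-δ * (u + x)) = C ^ 2 * (Real.exp (δ / 2 * u)
                    * Real.exp (δ / 2 * x) * Real.exp (-δ * (u + x))) from by ring, h6]
          _ ≤ C ^ 2 * (Real.exp (-(δ / 2) * u) * 1) := by
              apply mul_le_mul_of_nonneg_left _ (by positivity)
              exact mul_le_mul_of_nonneg_left h7 (Real.exp_pos _).le
          _ = C ^ 2 * Real.exp (-(δ / 2) * u) := by rw [mul_one]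
      calc u ^ (β - 1) * (x ^ (a - 1) * Real.exp (-δ * x)) * ((u + x) ^ a * Real.exp (-δ * (u + x)))
          ≤ u ^ (β - 1) * (x ^ (a - 1) * Real.exp (-δ * x)) * (C ^ 2 * Real.exp (-(δ / 2) * u)) := by
            apply mul_le_mul_of_nonneg_left key (by positivity)
        _ = C ^ 2 * (x ^ (a - 1) * Real.exp (-δ * x)) * (u ^ (β - 1) * Real.exp (-(δ / 2) * u)) := by
            ring
    · rw [hf]
      simp only
      rw [if_neg (fun h => hu (by linarith [h.2])), if_neg hu, mul_zero]
  calc (∫⁻ u, f (u + x))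
      ≤ ∫⁻ u, (ENNReal.ofReal (C ^ 2) * ENNReal.ofReal (x ^ (a - 1) * Real.exp (-δ * x)))
          * (if 0 ≤ u then ENNReal.ofReal (u ^ (β - 1) * Real.exp (-(δ / 2) * u)) else 0) :=
        lintegral_mono hbound
    _ = (ENNReal.ofReal (C ^ 2) * ENNReal.ofReal (x ^ (a - 1) * Real.exp (-δ * x))) * Iβ := by
        have hnetop : (ENNReal.ofReal (C ^ 2) * ENNReal.ofReal (x ^ (a - 1) * Real.exp (-δ * x)))
            ≠ ⊤ := ENNReal.mul_ne_top ENNReal.ofReal_ne_top ENNReal.ofReal_ne_top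
        rw [lintegral_const_mul' _ _ hnetop, hIβ]
    _ = (ENNReal.ofReal (C ^ 2) * Iβ) * ENNReal.ofReal (x ^ (a - 1) * Real.exp (-δ * x)) := by
        ring
    _ = (ENNReal.ofReal (C ^ 2) * Iβ) * (if 0 ≤ x then
          ENNReal.ofReal (x ^ (a - 1) * Real.exp (-δ * x)) else 0) := by
        rw [if_pos hx]
  

lemma measurable_rpow_const (c : ℝ) : Measurable fun x : ℝ => x ^ c := by
  rcases eq_or_ne c 0 with rfl | hc
  · simpa [Real.rpow_zero] using measurable_const
  · have hfun : (fun x : ℝ => x ^ c) = fun x =>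
        if x = 0 then 0 else
          Real.exp (Real.log x * c) * (if x < 0 then Real.cos (c * Real.pi) else 1) := by
      funext x
      rcases lt_trichotomy x 0 with hx | rfl | hx
      · rw [if_neg (ne_of_lt hx), if_pos hx, Real.rpow_def_of_neg hx, mul_comm c Real.pi]
      · rw [if_pos rfl, Real.zero_rpow hc]
      · rw [if_neg (ne_of_gt hx), if_neg (not_lt.mpr hx.le), mul_one, Real.rpow_def_of_pos hx]
    rw [hfun]
    refine Measurable.ite (measurableSet_singleton 0) measurable_const ?_
    exact ((Real.measurable_log.mul measurable_const).exp).mul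
      (Measurable.ite measurableSet_Iio measurable_const measurable_const)

lemma meas_rpow_const {δ : Type*} [MeasurableSpace δ] {f : δ → ℝ} (hf : Measurable f)
    (c : ℝ) : Measurable fun x => f x ^ c := (measurable_rpow_const c).comp hf

end Stmt8

open Stmt8

/-- Drift-moment estimate for the stationary measure of the eigenvalue SDE
(proof of Proposition 2.6 of the paper): the singular interaction term
`(λ_i + λ_j)/(λ_i − λ_j)` is integrable against the stationary density. -/
theorem stmt_8 (n : ℕ) (hn : 2 ≤ n) (α β γ : ℝ) (hβ0 : 0 < β) (hβ1 : β < 1)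
    (hγ : 0 < γ) (hαβ : 0 < α - ((n : ℝ) - 1) * β)
    (F : (Fin n → ℝ) → ℝ)
    (hF : ∀ l : Fin n → ℝ, F l =
      (∏ i : Fin n,
          (l i) ^ ((α - ((n : ℝ) - 1) * β) / 2 - 1) * Real.exp (-γ * l i)) *
        ∏ p ∈ Finset.univ.filter (fun p : Fin n × Fin n => p.1 < p.2),
          (l p.2 - l p.1) ^ β)
    (i j : Fin n) (hji : j < i) :
    (∫⁻ l in {l : Fin n → ℝ | 0 ≤ l ⟨0, by omega⟩ ∧ Monotone l},
        ENNReal.ofReal ((l i + l j) / (l i - l j) * F l)) < ⊤ := by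
  classical
  have hij : j ≠ i := ne_of_lt hji
  set a : ℝ := (α - ((n : ℝ) - 1) * β) / 2 with ha_def
  have ha : 0 < a := by rw [ha_def]; linarith
  set δ : ℝ := γ / 2 with hδ_def
  have hδ : 0 < δ := by rw [hδ_def]; linarith
  obtain ⟨C, hC1, hC⟩ := Stmt8.poly_le_exp (n ^ 2) hδ
  obtain ⟨K2, hK2top, hK2⟩ := Stmt8.kernel_bound ha hβ0 hβ1 hδ
  set G : ℝ → ℝ≥0∞ :=
    fun t => if 0 ≤ t then ENNReal.ofReal (t ^ (a - 1) * Real.exp (-δ * t)) else 0 with hG_def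
  set Rk : ℝ → ℝ → ℝ≥0∞ := fun x y => if 0 ≤ x ∧ x ≤ y then
      ENNReal.ofReal ((y - x) ^ (β - 1) * (x ^ (a - 1) * Real.exp (-δ * x))
        * (y ^ a * Real.exp (-δ * y))) else 0 with hRk_def
  set u : Finset (Fin n) := (Finset.univ.erase i).erase j with hu_def
  have hjmem : j ∈ Finset.univ.erase i := Finset.mem_erase.mpr ⟨hij, Finset.mem_univ j⟩
  set Φ : (Fin n → ℝ) → ℝ≥0∞ := fun l => Rk (l j) (l i) * ∏ k ∈ u, G (l k) with hΦ_def
  have hGmeas : Measurable G := by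
    rw [hG_def]
    refine Measurable.ite measurableSet_Ici ?_ measurable_const
    exact ((Stmt8.measurable_rpow_const (a-1)).mul ((measurable_id.const_mul (-δ)).exp)).ennreal_ofReal
  have hRkmeas : Measurable (fun p : ℝ × ℝ => Rk p.1 p.2) := by
    simp only [hRk_def]
    refine Measurable.ite ?_ ?_ measurable_const
    · exact (measurableSet_le measurable_const measurable_fst).inter
        (measurableSet_le measurable_fst measurable_snd)
    · refine Measurable.ennreal_ofReal ?_
      exact ((Stmt8.meas_rpow_const (measurable_snd.sub measurable_fst) (β-1)).mul
        ((Stmt8.meas_rpow_const measurable_fst (a-1)).mul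
          ((measurable_fst.const_mul (-δ)).exp))).mul
        ((Stmt8.meas_rpow_const measurable_snd a).mul ((measurable_snd.const_mul (-δ)).exp))
  have hΦmeas : Measurable Φ := by
    rw [hΦ_def]
    refine Measurable.mul ?_ ?_
    · have : (fun l : Fin n → ℝ => Rk (l j) (l i))
          = (fun p : ℝ × ℝ => Rk p.1 p.2) ∘ (fun l : Fin n → ℝ => (l j, l i)) := rfl
      rw [this]
      exact hRkmeas.comp ((measurable_pi_apply j).prodMk (measurable_pi_apply i))
    · exact Finset.measurable_prod _ (fun k _ => hGmeas.comp (measurable_pi_apply k))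
  have hGfin : (∫⁻ t : ℝ, G t) < ⊤ := by
    simp only [hG_def]
    exact Stmt8.gamma_fin ha hδ
  have hK2' : ∀ x : ℝ, (∫⁻ y, Rk x y) ≤ K2 * G x := by
    intro x
    simp only [hRk_def, hG_def]
    exact hK2 x
  -- finiteness of the integral of Φ
  have hΦfin : (∫⁻ l : Fin n → ℝ, Φ l) < ⊤ := by
    rw [volume_pi, lintegral_eq_lmarginal_univ (fun _ => (0 : ℝ))]
    rw [lmarginal_erase' _ hΦmeas (Finset.mem_univ i)]
    have hinner : (fun x : Fin n → ℝ =>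
          ∫⁻ t, Φ (Function.update x i t) ∂((fun _ : Fin n => (volume : Measure ℝ)) i))
        ≤ fun x => K2 * ∏ k ∈ Finset.univ.erase i, G (x k) := by
      intro x
      simp only
      have hupd : ∀ t : ℝ, Φ (Function.update x i t) = Rk (x j) t * ∏ k ∈ u, G (x k) := by
        intro t
        simp only [hΦ_def]
        rw [Function.update_of_ne hij, Function.update_self]
        congr 1
        refine Finset.prod_congr rfl (fun k hk => ?_)
        have hk_ne : k ≠ i := Finset.ne_of_mem_erase (Finset.mem_of_mem_erase hk)
        rw [Function.update_of_ne hk_ne]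
      calc (∫⁻ t, Φ (Function.update x i t))
          = ∫⁻ t, Rk (x j) t * (∏ k ∈ u, G (x k)) := by simp_rw [hupd]
        _ = (∫⁻ t, Rk (x j) t) * (∏ k ∈ u, G (x k)) := by
            refine lintegral_mul_const _ ?_
            exact hRkmeas.comp (measurable_const.prodMk measurable_id)
        _ ≤ (K2 * G (x j)) * ∏ k ∈ u, G (x k) := mul_le_mul_left (hK2' (x j)) _
        _ = K2 * ∏ k ∈ Finset.univ.erase i, G (x k) := by
            rw [mul_assoc]
            congr 1
            rw [hu_def]
            exact Finset.mul_prod_erase (Finset.univ.erase i) (fun k => G (x k)) hjmem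
    calc (∫⋯∫⁻_(Finset.univ.erase i),
            (fun x => ∫⁻ t, Φ (Function.update x i t)
              ∂((fun _ : Fin n => (volume : Measure ℝ)) i))
            ∂(fun _ => (volume : Measure ℝ))) (fun _ => (0 : ℝ))
        ≤ (∫⋯∫⁻_(Finset.univ.erase i),
            (fun x => K2 * ∏ k ∈ Finset.univ.erase i, G (x k))
            ∂(fun _ => (volume : Measure ℝ))) (fun _ => (0 : ℝ)) :=
          lmarginal_mono hinner _
      _ = K2 * ∏ k ∈ Finset.univ.erase i, ∫⁻ t, G t := by
          rw [Stmt8.lmarginal_const_mul _ K2 hK2top, Stmt8.lmarginal_prod G hGmeas]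
      _ < ⊤ := ENNReal.mul_lt_top hK2top.lt_top
          (ENNReal.prod_lt_top (fun k _ => hGfin))
  -- pointwise bound
  have hP1 : ∀ l : Fin n → ℝ, (∀ k, 0 ≤ l k) → Monotone l →
      ENNReal.ofReal ((l i + l j) / (l i - l j) * F l)
        ≤ ENNReal.ofReal (2 * C ^ n) * Φ l := by
    intro l hl0 hmono
    have hxy : l j ≤ l i := hmono hji.le
    rcases eq_or_lt_of_le hxy with heq | hlt
    · have hz : l i - l j = 0 := by rw [← heq]; ring
      rw [hz, div_zero, zero_mul, ENNReal.ofReal_zero]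
      exact zero_le
    have hd : 0 < l i - l j := sub_pos.mpr hlt
    set Bexpr : ℝ := (l i - l j) ^ (β - 1) * (l j ^ (a - 1) * Real.exp (-δ * l j))
        * (l i ^ a * Real.exp (-δ * l i)) with hB_def
    have hB0 : 0 ≤ Bexpr := by
      rw [hB_def]
      refine mul_nonneg (mul_nonneg (Real.rpow_nonneg hd.le _) ?_) ?_
      · exact mul_nonneg (Real.rpow_nonneg (hl0 j) _) (Real.exp_pos _).le
      · exact mul_nonneg (Real.rpow_nonneg (hl0 i) _) (Real.exp_pos _).le
    have hΦeq : Φ l = ENNReal.ofReal Bexpr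
        * ∏ k ∈ u, ENNReal.ofReal (l k ^ (a - 1) * Real.exp (-δ * l k)) := by
      simp only [hΦ_def, hRk_def, hG_def, hB_def]
      rw [if_pos ⟨hl0 j, hxy⟩]
      congr 1
      exact Finset.prod_congr rfl (fun k _ => if_pos (hl0 k))
    have hpairmem : (j, i) ∈ Finset.univ.filter (fun p : Fin n × Fin n => p.1 < p.2) :=
      Finset.mem_filter.mpr ⟨Finset.mem_univ _, hji⟩
    set Pe : Finset (Fin n × Fin n) :=
      (Finset.univ.filter (fun p : Fin n × Fin n => p.1 < p.2)).erase (j, i) with hPe_def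
    have hQsplit : (∏ p ∈ Finset.univ.filter (fun p : Fin n × Fin n => p.1 < p.2),
        (l p.2 - l p.1) ^ β) = (l i - l j) ^ β * ∏ p ∈ Pe, (l p.2 - l p.1) ^ β := by
      rw [hPe_def]
      exact (Finset.mul_prod_erase _ (fun p => (l p.2 - l p.1) ^ β) hpairmem).symm
    have hstep1 : (l i + l j) / (l i - l j) * F l
        = (l i - l j) ^ (β - 1) * ((l i + l j) *
            ((∏ k, (l k ^ (a - 1) * Real.exp (-γ * l k))) * ∏ p ∈ Pe, (l p.2 - l p.1) ^ β)) := by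
      rw [hF l, hQsplit]
      have hdne : l i - l j ≠ 0 := ne_of_gt hd
      have hrw : (l i - l j) ^ β = (l i - l j) ^ (β - 1) * (l i - l j) := by
        have h := Real.rpow_add_one hdne (β - 1)
        rw [show β - 1 + 1 = β from by ring] at h
        exact h
      rw [hrw]
      field_simp
    set M : ℝ := ∏ k, (1 + l k) with hM_def
    have hM1 : 1 ≤ M := by
      rw [hM_def]
      calc (1 : ℝ) = ∏ _k : Fin n, 1 := by rw [Finset.prod_const_one]
        _ ≤ ∏ k, (1 + l k) :=
            Finset.prod_le_prod (fun k _ => zero_le_one) (fun k _ => by linarith [hl0 k])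
    have hQ'bound : (∏ p ∈ Pe, (l p.2 - l p.1) ^ β) ≤ M ^ (n ^ 2) := by
      have h1 : ∀ p ∈ Pe, (l p.2 - l p.1) ^ β ≤ M := by
        intro p hp
        have hp0 := Finset.mem_of_mem_erase hp
        have hplt : p.1 < p.2 := (Finset.mem_filter.mp hp0).2
        have hle : l p.1 ≤ l p.2 := hmono hplt.le
        have h2 : 1 + l p.2 ≤ M := by
          rw [hM_def,
            ← Finset.mul_prod_erase Finset.univ (fun k => 1 + l k) (Finset.mem_univ p.2)]
          have h3 : (1 : ℝ) ≤ ∏ k ∈ Finset.univ.erase p.2, (1 + l k) := by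
            calc (1 : ℝ) = ∏ _k ∈ Finset.univ.erase p.2, 1 := (Finset.prod_const_one).symm
              _ ≤ _ := Finset.prod_le_prod (fun k _ => zero_le_one)
                  (fun k _ => by linarith [hl0 k])
          nlinarith [hl0 p.2]
        calc (l p.2 - l p.1) ^ β ≤ (1 + l p.2) ^ β :=
              Real.rpow_le_rpow (by linarith) (by linarith [hl0 p.1]) hβ0.le
          _ ≤ (1 + l p.2) ^ (1 : ℝ) :=
              Real.rpow_le_rpow_of_exponent_le (by linarith [hl0 p.2]) (by linarith)
          _ = 1 + l p.2 := Real.rpow_one _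
          _ ≤ M := h2
      calc (∏ p ∈ Pe, (l p.2 - l p.1) ^ β) ≤ M ^ Pe.card := by
            have h0 : ∀ p ∈ Pe, (0:ℝ) ≤ (l p.2 - l p.1) ^ β := by
              intro p hp
              have hp0 := Finset.mem_of_mem_erase hp
              have hplt : p.1 < p.2 := (Finset.mem_filter.mp hp0).2
              exact Real.rpow_nonneg (by linarith [hmono hplt.le]) _
            calc (∏ p ∈ Pe, (l p.2 - l p.1) ^ β) ≤ ∏ _p ∈ Pe, M :=
                  Finset.prod_le_prod h0 h1
              _ = M ^ Pe.card := Finset.prod_const M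
        _ ≤ M ^ (n ^ 2) := by
            apply pow_le_pow_right₀ hM1
            calc Pe.card
                ≤ (Finset.univ.filter (fun p : Fin n × Fin n => p.1 < p.2)).card := by
                  rw [hPe_def]
                  exact Finset.card_le_card (Finset.erase_subset _ _)
              _ ≤ (Finset.univ : Finset (Fin n × Fin n)).card :=
                  Finset.card_le_card (Finset.filter_subset _ _)
              _ = n ^ 2 := by simp [Finset.card_univ, sq]
    have hQ'0 : 0 ≤ ∏ p ∈ Pe, (l p.2 - l p.1) ^ β := by
      refine Finset.prod_nonneg (fun p hp => Real.rpow_nonneg ?_ _)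
      have hp0 := Finset.mem_of_mem_erase hp
      have hplt : p.1 < p.2 := (Finset.mem_filter.mp hp0).2
      linarith [hmono hplt.le]
    have hPbig0 : (0 : ℝ) ≤ ∏ k, (l k ^ (a - 1) * Real.exp (-γ * l k)) :=
      Finset.prod_nonneg
        (fun k _ => mul_nonneg (Real.rpow_nonneg (hl0 k) _) (Real.exp_pos _).le)
    have hv0 : ∀ k : Fin n,
        (0:ℝ) ≤ l k ^ (a - 1) * Real.exp (-γ * l k) * (1 + l k) ^ (n ^ 2) := by
      intro k
      refine mul_nonneg
        (mul_nonneg (Real.rpow_nonneg (hl0 k) _) (Real.exp_pos _).le) ?_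
      exact pow_nonneg (by linarith [hl0 k]) _
    have hv : ∀ e t : ℝ, 0 ≤ t →
        t ^ e * Real.exp (-γ * t) * (1 + t) ^ (n ^ 2) ≤ C * (t ^ e * Real.exp (-δ * t)) := by
      intro e t ht
      have h1 := hC t ht
      have h2 : Real.exp (-γ * t) * Real.exp (δ * t) = Real.exp (-δ * t) := by
        rw [← Real.exp_add]; congr 1; rw [hδ_def]; ring
      calc t ^ e * Real.exp (-γ * t) * (1 + t) ^ (n ^ 2)
          ≤ t ^ e * Real.exp (-γ * t) * (C * Real.exp (δ * t)) := by
            apply mul_le_mul_of_nonneg_left h1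
            exact mul_nonneg (Real.rpow_nonneg ht _) (Real.exp_pos _).le
        _ = C * (t ^ e * (Real.exp (-γ * t) * Real.exp (δ * t))) := by ring
        _ = C * (t ^ e * Real.exp (-δ * t)) := by rw [h2]
    have hprod_u : (∏ k ∈ u, (l k ^ (a - 1) * Real.exp (-γ * l k) * (1 + l k) ^ (n ^ 2)))
        ≤ C ^ u.card * ∏ k ∈ u, (l k ^ (a - 1) * Real.exp (-δ * l k)) := by
      calc (∏ k ∈ u, (l k ^ (a - 1) * Real.exp (-γ * l k) * (1 + l k) ^ (n ^ 2)))
          ≤ ∏ k ∈ u, (C * (l k ^ (a - 1) * Real.exp (-δ * l k))) :=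
            Finset.prod_le_prod (fun k _ => hv0 k) (fun k _ => hv (a - 1) (l k) (hl0 k))
        _ = C ^ u.card * ∏ k ∈ u, (l k ^ (a - 1) * Real.exp (-δ * l k)) := by
            rw [Finset.prod_mul_distrib, Finset.prod_const]
    have hyv : (l i + l j) * (l i ^ (a - 1) * Real.exp (-γ * l i) * (1 + l i) ^ (n ^ 2))
        ≤ 2 * (C * (l i ^ a * Real.exp (-δ * l i))) := by
      have hpow : l i ^ (a - 1) * l i = l i ^ a := by
        rcases eq_or_lt_of_le (hl0 i) with h0 | h0
        · rw [← h0, mul_zero, Real.zero_rpow (ne_of_gt ha)]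
        · have h := Real.rpow_add_one (ne_of_gt h0) (a - 1)
          rw [show a - 1 + 1 = a from by ring] at h
          exact h.symm
      have h6 : l i + l j ≤ 2 * l i := by linarith
      calc (l i + l j) * (l i ^ (a - 1) * Real.exp (-γ * l i) * (1 + l i) ^ (n ^ 2))
          ≤ (2 * l i) * (l i ^ (a - 1) * Real.exp (-γ * l i) * (1 + l i) ^ (n ^ 2)) :=
            mul_le_mul_of_nonneg_right h6 (hv0 i)
        _ = 2 * ((l i ^ (a - 1) * l i) * Real.exp (-γ * l i) * (1 + l i) ^ (n ^ 2)) := by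
            ring
        _ = 2 * (l i ^ a * Real.exp (-γ * l i) * (1 + l i) ^ (n ^ 2)) := by rw [hpow]
        _ ≤ 2 * (C * (l i ^ a * Real.exp (-δ * l i))) := by
            have := hv a (l i) (hl0 i)
            linarith
    have hxv : l j ^ (a - 1) * Real.exp (-γ * l j) * (1 + l j) ^ (n ^ 2)
        ≤ C * (l j ^ (a - 1) * Real.exp (-δ * l j)) := hv (a - 1) (l j) (hl0 j)
    have hsplit : (∏ k, (l k ^ (a - 1) * Real.exp (-γ * l k) * (1 + l k) ^ (n ^ 2)))
        = (l i ^ (a - 1) * Real.exp (-γ * l i) * (1 + l i) ^ (n ^ 2)) *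
          ((l j ^ (a - 1) * Real.exp (-γ * l j) * (1 + l j) ^ (n ^ 2)) *
            ∏ k ∈ u, (l k ^ (a - 1) * Real.exp (-γ * l k) * (1 + l k) ^ (n ^ 2))) := by
      rw [hu_def]
      rw [← Finset.mul_prod_erase Finset.univ
          (fun k => l k ^ (a - 1) * Real.exp (-γ * l k) * (1 + l k) ^ (n ^ 2))
          (Finset.mem_univ i),
        ← Finset.mul_prod_erase (Finset.univ.erase i)
          (fun k => l k ^ (a - 1) * Real.exp (-γ * l k) * (1 + l k) ^ (n ^ 2)) hjmem]
    have hPM : (∏ k, (l k ^ (a - 1) * Real.exp (-γ * l k))) * M ^ (n ^ 2)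
        = ∏ k, (l k ^ (a - 1) * Real.exp (-γ * l k) * (1 + l k) ^ (n ^ 2)) := by
      rw [hM_def, ← Finset.prod_pow, ← Finset.prod_mul_distrib]
    have hcard : u.card = n - 2 := by
      rw [hu_def, Finset.card_erase_of_mem hjmem,
        Finset.card_erase_of_mem (Finset.mem_univ i), Finset.card_univ, Fintype.card_fin]
      omega
    have hCn : C ^ u.card * C * C = C ^ n := by
      rw [hcard, ← pow_succ, ← pow_succ]
      congr 1
      omega
    have hreal : (l i + l j) / (l i - l j) * F l
        ≤ 2 * C ^ n * (Bexpr * ∏ k ∈ u, (l k ^ (a - 1) * Real.exp (-δ * l k))) := by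
      calc (l i + l j) / (l i - l j) * F l
          = (l i - l j) ^ (β - 1) * ((l i + l j) *
              ((∏ k, (l k ^ (a - 1) * Real.exp (-γ * l k)))
                * ∏ p ∈ Pe, (l p.2 - l p.1) ^ β)) := hstep1
        _ ≤ (l i - l j) ^ (β - 1) * ((l i + l j) *
              ((∏ k, (l k ^ (a - 1) * Real.exp (-γ * l k))) * M ^ (n ^ 2))) := by
            apply mul_le_mul_of_nonneg_left _ (Real.rpow_nonneg hd.le _)
            apply mul_le_mul_of_nonneg_left _ (by linarith [hl0 i, hl0 j] : (0:ℝ) ≤ l i + l j)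
            exact mul_le_mul_of_nonneg_left hQ'bound hPbig0
        _ = (l i - l j) ^ (β - 1) *
              (((l i + l j) * (l i ^ (a - 1) * Real.exp (-γ * l i) * (1 + l i) ^ (n ^ 2))) *
                ((l j ^ (a - 1) * Real.exp (-γ * l j) * (1 + l j) ^ (n ^ 2)) *
                  ∏ k ∈ u, (l k ^ (a - 1) * Real.exp (-γ * l k) * (1 + l k) ^ (n ^ 2)))) := by
            rw [hPM, hsplit]; ring
        _ ≤ (l i - l j) ^ (β - 1) *
              ((2 * (C * (l i ^ a * Real.exp (-δ * l i)))) *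
                ((C * (l j ^ (a - 1) * Real.exp (-δ * l j))) *
                  (C ^ u.card * ∏ k ∈ u, (l k ^ (a - 1) * Real.exp (-δ * l k))))) := by
            apply mul_le_mul_of_nonneg_left _ (Real.rpow_nonneg hd.le _)
            have hc0 : (0:ℝ) ≤ C := le_trans zero_le_one hC1
            refine mul_le_mul hyv (mul_le_mul hxv hprod_u ?_ ?_) ?_ ?_
            · exact Finset.prod_nonneg (fun k _ => hv0 k)
            · exact mul_nonneg hc0
                (mul_nonneg (Real.rpow_nonneg (hl0 j) _) (Real.exp_pos _).le)
            · exact mul_nonneg (hv0 j) (Finset.prod_nonneg (fun k _ => hv0 k))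
            · exact mul_nonneg (by norm_num) (mul_nonneg hc0
                (mul_nonneg (Real.rpow_nonneg (hl0 i) _) (Real.exp_pos _).le))
        _ = 2 * C ^ n * (Bexpr * ∏ k ∈ u, (l k ^ (a - 1) * Real.exp (-δ * l k))) := by
            rw [hB_def, ← hCn]; ring
    calc ENNReal.ofReal ((l i + l j) / (l i - l j) * F l)
        ≤ ENNReal.ofReal (2 * C ^ n *
            (Bexpr * ∏ k ∈ u, (l k ^ (a - 1) * Real.exp (-δ * l k)))) :=
          ENNReal.ofReal_le_ofReal hreal
      _ = ENNReal.ofReal (2 * C ^ n) * ENNReal.ofReal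
            (Bexpr * ∏ k ∈ u, (l k ^ (a - 1) * Real.exp (-δ * l k))) := by
          rw [ENNReal.ofReal_mul (by positivity)]
      _ = ENNReal.ofReal (2 * C ^ n) * Φ l := by
          rw [hΦeq, ENNReal.ofReal_mul hB0, ENNReal.ofReal_prod_of_nonneg
            (fun k _ => mul_nonneg (Real.rpow_nonneg (hl0 k) _) (Real.exp_pos _).le)]
  -- conclusion
  calc (∫⁻ l in {l : Fin n → ℝ | 0 ≤ l ⟨0, by omega⟩ ∧ Monotone l},
        ENNReal.ofReal ((l i + l j) / (l i - l j) * F l))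
      ≤ ∫⁻ l in {l : Fin n → ℝ | 0 ≤ l ⟨0, by omega⟩ ∧ Monotone l},
          ENNReal.ofReal (2 * C ^ n) * Φ l := by
        refine setLIntegral_mono (measurable_const.mul hΦmeas) ?_
        intro l hl
        have hl0 : ∀ k, 0 ≤ l k := by
          intro k
          exact le_trans hl.1 (hl.2 (by exact Fin.mk_le_of_le_val (Nat.zero_le _)))
        exact hP1 l hl0 hl.2
    _ ≤ ∫⁻ l, ENNReal.ofReal (2 * C ^ n) * Φ l := setLIntegral_le_lintegral _ _
    _ = ENNReal.ofReal (2 * C ^ n) * ∫⁻ l, Φ l :=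
        lintegral_const_mul' _ _ ENNReal.ofReal_ne_top
    _ < ⊤ := ENNReal.mul_lt_top ENNReal.ofReal_lt_top hΦfin
end
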